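/- Let X and Y be nonnegative absolutely continuous random variables with finite means and strictly increasing distribution functions F and G, and let h be a strictly increasing distortion function whose dual distortion h*(p)=1−h(1−p) is antistarshaped. If X ≤_qmit Y, then X_h ≤_qmit Y_h. -/

import Mathlib

open MeasureTheory Set Filter

/-- The (generalized inverse) quantile function of a distribution function `F`. -/
noncomputable def quantile (F : ℝ → ℝ) (p : ℝ) : ℝ := sInf {x : ℝ | p ≤ F x}

/-- `F` is the distribution function of a nonnegative random variable
(with total mass one). -/
def IsNonnegCDF (F : ℝ → ℝ) : Prop :=
  Monotone F ∧ (∀ x : ℝ, x ≤ 0 → F x = 0) ∧ Tendsto F atTop (nhds 1)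

/-- A distortion function: a left-continuous increasing map of `[0,1]` onto itself
with `h 0 = 0` and `h 1 = 1`. -/
def IsDistortionFn (h : ℝ → ℝ) : Prop :=
  MonotoneOn h (Icc 0 1) ∧ (∀ p ∈ Ioc (0:ℝ) 1, ContinuousWithinAt h (Iio p) p) ∧
    h 0 = 0 ∧ h 1 = 1 ∧ MapsTo h (Icc 0 1) (Icc 0 1)

/-- `h` is starshaped: `h p / p` is increasing on `(0,1]`. -/
def Starshaped (h : ℝ → ℝ) : Prop := MonotoneOn (fun p => h p / p) (Ioc 0 1)

/-- `h` is antistarshaped: `h p / p` is decreasing on `(0,1]`. -/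
def Antistarshaped (h : ℝ → ℝ) : Prop := AntitoneOn (fun p => h p / p) (Ioc 0 1)

/-- Distribution function of the distorted random variable `X_h`,
whose survival function is `h ∘ (1 - F)`. -/
noncomputable def distortedCDF (h F : ℝ → ℝ) : ℝ → ℝ := fun x => 1 - h (1 - F x)

/-- `∫_0^{F⁻¹(p)} (1 - F(x)) dx`. -/
noncomputable def tttIntegral (F : ℝ → ℝ) (p : ℝ) : ℝ :=
  ∫ x in (0:ℝ)..(quantile F p), (1 - F x)

/-- `∫_{F⁻¹(p)}^∞ (1 - F(x)) dx`. -/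
noncomputable def ewIntegral (F : ℝ → ℝ) (p : ℝ) : ℝ :=
  ∫ x in Ioi (quantile F p), (1 - F x)

/-- `∫_0^{F⁻¹(p)} F(x) dx`. -/
noncomputable def mitIntegral (F : ℝ → ℝ) (p : ℝ) : ℝ :=
  ∫ x in (0:ℝ)..(quantile F p), F x

/-- Total time on test transform order. -/
def TTT_le (F G : ℝ → ℝ) : Prop := ∀ p ∈ Ioo (0:ℝ) 1, tttIntegral F p ≤ tttIntegral G p

/-- Excess wealth order. -/
def EW_le (F G : ℝ → ℝ) : Prop := ∀ p ∈ Ioo (0:ℝ) 1, ewIntegral F p ≤ ewIntegral G p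

/-- Decreasing mean residual life order. -/
def DMRL_le (F G : ℝ → ℝ) : Prop :=
  MonotoneOn (fun p => ewIntegral G p / ewIntegral F p) (Ioo (0:ℝ) 1)

/-- Quantile mean inactivity time order. -/
def QMIT_le (F G : ℝ → ℝ) : Prop :=
  AntitoneOn (fun p => mitIntegral F p / mitIntegral G p) (Ioo (0:ℝ) 1)

namespace QmitAux

variable {F : ℝ → ℝ}

lemma cdf_nonneg (hF : IsNonnegCDF F) (x : ℝ) : 0 ≤ F x := by
  rcases le_or_gt x 0 with hx | hx
  · exact (hF.2.1 x hx).ge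
  · rw [← hF.2.1 0 le_rfl]; exact hF.1 hx.le

lemma cdf_le_one (hF : IsNonnegCDF F) (x : ℝ) : F x ≤ 1 :=
  ge_of_tendsto hF.2.2 (eventually_atTop.2 ⟨x, fun _ hy => hF.1 hy⟩)

lemma cdf_lt_one (hF : IsNonnegCDF F) (hFs : StrictMonoOn F (Ici 0)) (x : ℝ) : F x < 1 := by
  rcases lt_or_ge (F x) 1 with hlt | hge
  · exact hlt
  · exfalso
    have h1 : F (max x 0) < F (max x 0 + 1) :=
      hFs (le_max_right x 0) (le_trans (le_max_right x 0) (by linarith)) (by linarith)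
    have h2 : F x ≤ F (max x 0) := hF.1 (le_max_left x 0)
    have h3 := cdf_le_one hF (max x 0 + 1)
    linarith

lemma qset_nonempty (hF : IsNonnegCDF F) {u : ℝ} (hu : u < 1) : {x | u ≤ F x}.Nonempty :=
  (hF.2.2.eventually (eventually_ge_nhds hu)).exists

lemma qset_bddBelow (hF : IsNonnegCDF F) {u : ℝ} (hu : 0 < u) : BddBelow {x | u ≤ F x} := by
  refine ⟨0, fun x hx => ?_⟩
  by_contra hx0
  push_neg at hx0
  have := hF.2.1 x hx0.le
  simp only [mem_setOf_eq, this] at hx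
  linarith

lemma quantile_nonneg (hF : IsNonnegCDF F) {u : ℝ} (hu : 0 < u) (hu1 : u < 1) :
    0 ≤ quantile F u :=
  le_csInf (qset_nonempty hF hu1) (fun x hx => by
    by_contra hx0
    push_neg at hx0
    have := hF.2.1 x hx0.le
    simp only [mem_setOf_eq, this] at hx
    linarith)

lemma quantile_pos (hF : IsNonnegCDF F) (hc : Continuous F) {u : ℝ} (hu : u ∈ Ioo (0:ℝ) 1) :
    0 < quantile F u := by
  have hca : ContinuousAt F 0 := hc.continuousAt
  rw [Metric.continuousAt_iff] at hca
  obtain ⟨δ, hδ, hδ2⟩ := hca u hu.1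
  have hlb : δ / 2 ≤ quantile F u := by
    refine le_csInf (qset_nonempty hF hu.2) (fun x hx => ?_)
    by_contra hxd
    push_neg at hxd
    rcases le_or_gt x 0 with hx0 | hx0
    · have := hF.2.1 x hx0
      simp only [mem_setOf_eq, this] at hx; linarith [hu.1]
    · have hdist : dist x 0 < δ := by
        rw [Real.dist_eq, sub_zero, abs_of_pos hx0]; linarith
      have := hδ2 hdist
      rw [Real.dist_eq, hF.2.1 0 le_rfl, sub_zero, abs_of_nonneg (cdf_nonneg hF x)] at this
      exact absurd hx (by simp only [mem_setOf_eq]; push_neg; exact this)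
  linarith

lemma cdf_quantile (hF : IsNonnegCDF F) (hc : Continuous F) {u : ℝ} (hu : u ∈ Ioo (0:ℝ) 1) :
    F (quantile F u) = u := by
  have hcl : IsClosed {x | u ≤ F x} := isClosed_le continuous_const hc
  have hmem := hcl.csInf_mem (qset_nonempty hF hu.2) (qset_bddBelow hF hu.1)
  refine le_antisymm ?_ hmem
  have hev : ∀ x ∈ Iio (quantile F u), F x ≤ u := by
    intro x hx
    by_contra hxx
    push_neg at hxx
    exact absurd (csInf_le (qset_bddBelow hF hu.1) hxx.le) (not_le.2 hx)
  exact le_of_tendsto (hc.continuousWithinAt (s := Iio (quantile F u)))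
    (eventually_nhdsWithin_of_forall hev)

lemma quantile_le_iff (hF : IsNonnegCDF F) {u x : ℝ} (hu : u ∈ Ioo (0:ℝ) 1)
    (hc : Continuous F) : quantile F u ≤ x ↔ u ≤ F x := by
  constructor
  · intro hx
    calc u = F (quantile F u) := (cdf_quantile hF hc hu).symm
    _ ≤ F x := hF.1 hx
  · exact fun hx => csInf_le (qset_bddBelow hF hu.1) hx

lemma lt_quantile_iff (hF : IsNonnegCDF F) {u x : ℝ} (hu : u ∈ Ioo (0:ℝ) 1)
    (hc : Continuous F) : x < quantile F u ↔ F x < u := by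
  rw [← not_le, ← not_le, quantile_le_iff hF hu hc]

lemma quantile_mono (hF : IsNonnegCDF F) {u v : ℝ} (hu : u ∈ Ioo (0:ℝ) 1)
    (hv : v ∈ Ioo (0:ℝ) 1) (huv : u ≤ v) : quantile F u ≤ quantile F v :=
  csInf_le_csInf (qset_bddBelow hF hu.1) (qset_nonempty hF hv.2)
    (fun x hx => le_trans huv hx)

lemma quantile_zero (hF : IsNonnegCDF F) : quantile F 0 = 0 := by
  have : {x : ℝ | (0:ℝ) ≤ F x} = univ := eq_univ_of_forall (fun x => cdf_nonneg hF x)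
  rw [quantile, this]
  refine Real.sInf_of_not_bddBelow ?_
  rintro ⟨b, hb⟩
  have := hb (mem_univ (b - 1))
  linarith

lemma quantile_one (hF : IsNonnegCDF F) (hFs : StrictMonoOn F (Ici 0)) :
    quantile F 1 = 0 := by
  have : {x : ℝ | (1:ℝ) ≤ F x} = ∅ := by
    ext x; simp only [mem_setOf_eq, mem_empty_iff_false, iff_false, not_le]
    exact cdf_lt_one hF hFs x
  rw [quantile, this, Real.sInf_empty]

lemma mit_nonneg (hF : IsNonnegCDF F) (hc : Continuous F) {u : ℝ}
    (hu : 0 ≤ u) (hu1 : u < 1) : 0 ≤ mitIntegral F u := by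
  rcases eq_or_lt_of_le hu with h0 | h0
  · rw [mitIntegral, ← h0, quantile_zero hF]
    simp
  · exact intervalIntegral.integral_nonneg (quantile_nonneg hF h0 hu1)
      (fun x _ => cdf_nonneg hF x)

lemma mit_zero (hF : IsNonnegCDF F) : mitIntegral F 0 = 0 := by
  rw [mitIntegral, quantile_zero hF]; simp

lemma mit_mono (hF : IsNonnegCDF F) (hc : Continuous F) {u v : ℝ}
    (hu : u ∈ Ioo (0:ℝ) 1) (hv : v ∈ Ioo (0:ℝ) 1) (huv : u ≤ v) :
    mitIntegral F u ≤ mitIntegral F v := by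
  rw [mitIntegral, mitIntegral]
  have h1 : quantile F u ≤ quantile F v := quantile_mono hF hu hv huv
  have h0 : 0 ≤ quantile F u := (quantile_pos hF hc hu).le
  rw [← intervalIntegral.integral_add_adjacent_intervals
    (hc.intervalIntegrable 0 (quantile F u)) (hc.intervalIntegrable (quantile F u) (quantile F v))]
  have h2 : 0 ≤ ∫ x in (quantile F u)..(quantile F v), F x :=
    intervalIntegral.integral_nonneg (μ := volume) h1 (fun x _ => cdf_nonneg hF x)
  linarith

lemma mit_pos (hF : IsNonnegCDF F) (hFs : StrictMonoOn F (Ici 0)) (hc : Continuous F)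
    {u : ℝ} (hu : u ∈ Ioo (0:ℝ) 1) : 0 < mitIntegral F u := by
  set Y := quantile F u with hY
  have hY0 : 0 < Y := quantile_pos hF hc hu
  have hFY2 : 0 < F (Y / 2) := by
    rw [← hF.2.1 0 le_rfl]
    exact hFs (mem_Ici.2 le_rfl) (by linarith : (0:ℝ) ≤ Y / 2) (by linarith)
  have hsplit : mitIntegral F u = (∫ x in (0:ℝ)..(Y/2), F x) + ∫ x in (Y/2)..Y, F x := by
    rw [mitIntegral, ← hY,
      intervalIntegral.integral_add_adjacent_intervals (hc.intervalIntegrable 0 (Y/2))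
        (hc.intervalIntegrable (Y/2) Y)]
  have h1 : 0 ≤ ∫ x in (0:ℝ)..(Y/2), F x :=
    intervalIntegral.integral_nonneg (by linarith) (fun x _ => cdf_nonneg hF x)
  have h2 : (Y/2) * F (Y/2) ≤ ∫ x in (Y/2)..Y, F x := by
    have := intervalIntegral.integral_mono_on (by linarith : Y/2 ≤ Y)
      (intervalIntegrable_const (μ := volume) (c := F (Y/2))) (hc.intervalIntegrable (Y/2) Y)
      (fun x hx => hF.1 hx.1)
    rw [intervalIntegral.integral_const, smul_eq_mul] at this
    calc (Y/2) * F (Y/2) = (Y - Y/2) * F (Y/2) := by ring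
    _ ≤ _ := this
  nlinarith

end QmitAux

namespace QmitAux

/-- dual distortion -/
noncomputable def Hd (h : ℝ → ℝ) : ℝ → ℝ := fun u => 1 - h (1 - u)

noncomputable def theta (h : ℝ → ℝ) (p : ℝ) : ℝ :=
  sInf {u | u ∈ Icc (0:ℝ) 1 ∧ p ≤ Hd h u}

variable {h : ℝ → ℝ}

lemma Hd_zero (hdist : IsDistortionFn h) : Hd h 0 = 0 := by
  simp [Hd, hdist.2.2.2.1]

lemma Hd_one (hdist : IsDistortionFn h) : Hd h 1 = 1 := by
  simp [Hd, hdist.2.2.1]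

lemma Hd_mono (hdist : IsDistortionFn h) : MonotoneOn (Hd h) (Icc 0 1) := by
  intro u hu v hv huv
  have h1 : (1 - v) ∈ Icc (0:ℝ) 1 := ⟨by linarith [hv.2], by linarith [hv.1]⟩
  have h2 : (1 - u) ∈ Icc (0:ℝ) 1 := ⟨by linarith [hu.2], by linarith [hu.1]⟩
  have := hdist.1 h1 h2 (by linarith)
  simp only [Hd]; linarith

lemma Hd_mem (hdist : IsDistortionFn h) {u : ℝ} (hu : u ∈ Icc (0:ℝ) 1) :
    Hd h u ∈ Icc (0:ℝ) 1 := by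
  have := hdist.2.2.2.2 (⟨by linarith [hu.2], by linarith [hu.1]⟩ : (1-u) ∈ Icc (0:ℝ) 1)
  exact ⟨by simp only [Hd]; linarith [this.2], by simp only [Hd]; linarith [this.1]⟩

lemma Hd_strict (hstrict : StrictMonoOn h (Icc 0 1)) : StrictMonoOn (Hd h) (Icc 0 1) := by
  intro u hu v hv huv
  have := hstrict (⟨by linarith [hv.2], by linarith [hv.1]⟩ : (1-v) ∈ Icc (0:ℝ) 1)
    (⟨by linarith [hu.2], by linarith [hu.1]⟩ : (1-u) ∈ Icc (0:ℝ) 1) (by linarith)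
  simp only [Hd]; linarith

lemma Hd_rc (hdist : IsDistortionFn h) {u : ℝ} (hu : u ∈ Ico (0:ℝ) 1) :
    ContinuousWithinAt (Hd h) (Ioi u) u := by
  have hmem : (1 - u) ∈ Ioc (0:ℝ) 1 := ⟨by linarith [hu.2], by linarith [hu.1]⟩
  have hcomp : ContinuousWithinAt (h ∘ (fun v : ℝ => 1 - v)) (Ioi u) u := by
    refine ContinuousWithinAt.comp (hdist.2.1 (1 - u) hmem)
      ((continuous_const.sub continuous_id).continuousWithinAt) ?_
    intro v hv
    simp only [mem_Iio]
    simp only [mem_Ioi] at hv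
    linarith
  exact continuousWithinAt_const.sub hcomp

lemma theta_set_nonempty (hdist : IsDistortionFn h) {p : ℝ} (hp : p ≤ 1) :
    {u | u ∈ Icc (0:ℝ) 1 ∧ p ≤ Hd h u}.Nonempty :=
  ⟨1, ⟨⟨zero_le_one, le_rfl⟩, by rw [Hd_one hdist]; exact hp⟩⟩

lemma theta_set_bddBelow {p : ℝ} : BddBelow {u | u ∈ Icc (0:ℝ) 1 ∧ p ≤ Hd h u} :=
  ⟨0, fun u hu => hu.1.1⟩

lemma theta_mem_Icc (hdist : IsDistortionFn h) {p : ℝ} (hp : p ≤ 1) :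
    theta h p ∈ Icc (0:ℝ) 1 :=
  ⟨le_csInf (theta_set_nonempty hdist hp) (fun u hu => hu.1.1),
   csInf_le theta_set_bddBelow ⟨⟨zero_le_one, le_rfl⟩, by rw [Hd_one hdist]; exact hp⟩⟩

lemma theta_spec (hdist : IsDistortionFn h) {p : ℝ} (hp : p ≤ 1) :
    p ≤ Hd h (theta h p) := by
  set S := {u | u ∈ Icc (0:ℝ) 1 ∧ p ≤ Hd h u} with hS
  have hne := theta_set_nonempty hdist hp
  have hbdd : BddBelow S := theta_set_bddBelow
  have hIcc := theta_mem_Icc hdist hp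
  rcases eq_or_lt_of_le hIcc.2 with h1 | h1
  · rw [h1, Hd_one hdist]; exact hp
  · have hrc : ContinuousWithinAt (Hd h) (Ioi (theta h p)) (theta h p) :=
      Hd_rc hdist ⟨hIcc.1, h1⟩
    have hrc2 : ContinuousWithinAt (Hd h) S (theta h p) := by
      refine (continuousWithinAt_insert_self.2 hrc).mono ?_
      intro u hu
      rcases eq_or_lt_of_le (csInf_le hbdd hu) with he | hlt
      · exact Or.inl he.symm
      · exact Or.inr hlt
    haveI : (nhdsWithin (theta h p) S).NeBot :=
      mem_closure_iff_nhdsWithin_neBot.1 (csInf_mem_closure hne hbdd)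
    exact ge_of_tendsto hrc2 (eventually_nhdsWithin_of_forall (fun u hu => hu.2))

lemma theta_pos (hdist : IsDistortionFn h) {p : ℝ} (hp : p ∈ Ioo (0:ℝ) 1) :
    0 < theta h p := by
  rcases eq_or_lt_of_le (theta_mem_Icc hdist hp.2.le).1 with h0 | h0
  · exfalso
    have := theta_spec hdist hp.2.le
    rw [← h0, Hd_zero hdist] at this
    linarith [hp.1]
  · exact h0

lemma theta_mono (hdist : IsDistortionFn h) {p q : ℝ} (hq : q ≤ 1) (hpq : p ≤ q) :
    theta h p ≤ theta h q :=
  csInf_le_csInf theta_set_bddBelow (theta_set_nonempty hdist hq)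
    (fun u hu => ⟨hu.1, le_trans hpq hu.2⟩)

lemma quantile_distorted (hF : IsNonnegCDF F) (hdist : IsDistortionFn h)
    {p : ℝ} (hp : p ∈ Ioo (0:ℝ) 1) :
    quantile (distortedCDF h F) p = quantile F (theta h p) := by
  have hset : {x : ℝ | p ≤ distortedCDF h F x} = {x : ℝ | theta h p ≤ F x} := by
    ext x
    have hFx : F x ∈ Icc (0:ℝ) 1 := ⟨cdf_nonneg hF x, cdf_le_one hF x⟩
    simp only [mem_setOf_eq]
    constructor
    · intro hx
      exact csInf_le theta_set_bddBelow ⟨hFx, hx⟩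
    · intro hx
      have hIcc := theta_mem_Icc hdist hp.2.le
      have h1 : Hd h (theta h p) ≤ Hd h (F x) := Hd_mono hdist hIcc hFx hx
      have h2 := theta_spec hdist hp.2.le
      show p ≤ 1 - h (1 - F x)
      calc p ≤ Hd h (theta h p) := h2
      _ ≤ Hd h (F x) := h1
  rw [quantile, quantile, hset]

end QmitAux

namespace QmitAux

/-- the level at which the antistarshaped ratio `Hd h u / u` crosses `s` -/
noncomputable def lvl (h : ℝ → ℝ) (s : ℝ) : ℝ :=
  sSup ({0} ∪ {u | u ∈ Ioc (0:ℝ) 1 ∧ s < Hd h u / u})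

lemma lvl_set_bddAbove {h : ℝ → ℝ} {s : ℝ} :
    BddAbove ({0} ∪ {u | u ∈ Ioc (0:ℝ) 1 ∧ s < Hd h u / u}) := by
  refine ⟨1, fun u hu => ?_⟩
  rcases hu with hu | hu
  · simp only [mem_singleton_iff] at hu; rw [hu]; exact zero_le_one
  · exact hu.1.2

lemma lvl_nonneg {h : ℝ → ℝ} (s : ℝ) : 0 ≤ lvl h s :=
  le_csSup lvl_set_bddAbove (Or.inl rfl)

lemma lvl_le_one {h : ℝ → ℝ} (s : ℝ) : lvl h s ≤ 1 := by
  refine csSup_le ⟨0, Or.inl rfl⟩ (fun u hu => ?_)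
  rcases hu with hu | hu
  · simp only [mem_singleton_iff] at hu; rw [hu]; exact zero_le_one
  · exact hu.1.2

lemma lvl_antitone {h : ℝ → ℝ} : Antitone (lvl h) := by
  intro s s' hss
  refine csSup_le_csSup lvl_set_bddAbove ⟨0, Or.inl rfl⟩ (fun u hu => ?_)
  rcases hu with hu | hu
  · exact Or.inl hu
  · exact Or.inr ⟨hu.1, lt_of_le_of_lt hss hu.2⟩

lemma lt_of_lt_lvl {h : ℝ → ℝ} (hanti : Antistarshaped (fun p => 1 - h (1 - p)))
    {u s : ℝ} (hu : u ∈ Ioc (0:ℝ) 1) (hlt : u < lvl h s) : s < Hd h u / u := by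
  have hne : ({0} ∪ {u | u ∈ Ioc (0:ℝ) 1 ∧ s < Hd h u / u}).Nonempty := ⟨0, Or.inl rfl⟩
  rw [lvl] at hlt
  obtain ⟨v, hv, huv⟩ := exists_lt_of_lt_csSup hne hlt
  rcases hv with hv | hv
  · simp only [mem_singleton_iff] at hv; rw [hv] at huv; linarith [hu.1]
  · have hmono : Hd h v / v ≤ Hd h u / u := hanti hu hv.1 huv.le
    exact lt_of_lt_of_le hv.2 hmono

lemma le_lvl_of_lt {h : ℝ → ℝ} {u s : ℝ} (hu : u ∈ Ioc (0:ℝ) 1)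
    (hs : s < Hd h u / u) : u ≤ lvl h s :=
  le_csSup lvl_set_bddAbove (Or.inr ⟨hu, hs⟩)

variable {F h : ℝ → ℝ}

lemma lint_ofReal_Ioo (hF : IsNonnegCDF F) (hc : Continuous F) {m : ℝ} (hm : 0 ≤ m) :
    ∫⁻ x in Ioo (0:ℝ) m, ENNReal.ofReal (F x) = ENNReal.ofReal (∫ x in (0:ℝ)..m, F x) := by
  have hint : IntegrableOn F (Ioo 0 m) volume :=
    ((hc.intervalIntegrable 0 m).1).mono_set Ioo_subset_Ioc_self
  rw [intervalIntegral.integral_of_le hm, integral_Ioc_eq_integral_Ioo,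
    ofReal_integral_eq_lintegral_ofReal hint (ae_of_all _ (fun x => cdf_nonneg hF x))]

lemma rep (hF : IsNonnegCDF F) (hFs : StrictMonoOn F (Ici 0)) (hc : Continuous F)
    (hdist : IsDistortionFn h) (hanti : Antistarshaped (fun p => 1 - h (1 - p)))
    {t : ℝ} (ht : t ∈ Ioo (0:ℝ) 1) :
    ENNReal.ofReal (∫ x in (0:ℝ)..(quantile F t), Hd h (F x)) =
      ∫⁻ s in Ioi (0:ℝ), ENNReal.ofReal (mitIntegral F (min t (lvl h s))) := by
  set X := quantile F t with hXdef
  have hX0 : 0 < X := quantile_pos hF hc ht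
  have hFX : F X = t := cdf_quantile hF hc ht
  have FIcc : ∀ x, F x ∈ Icc (0:ℝ) 1 := fun x => ⟨cdf_nonneg hF x, cdf_le_one hF x⟩
  have hFxpos : ∀ x : ℝ, 0 < x → 0 < F x := by
    intro x hx
    rw [← hF.2.1 0 le_rfl]
    exact hFs (mem_Ici.2 le_rfl) hx.le hx
  set W : ℝ → ℝ := fun x => Hd h (F x) / F x with hWdef
  have hHFmono : Monotone (fun x => Hd h (F x)) :=
    fun x y hxy => Hd_mono hdist (FIcc x) (FIcc y) (hF.1 hxy)
  have hWmeas : Measurable W := (hHFmono.measurable).div hc.measurable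
  have hIoc : IntegrableOn (fun x => Hd h (F x)) (Ioc 0 X) volume :=
    ((hHFmono.monotoneOn (Set.uIcc (0:ℝ) X)).intervalIntegrable).1
  have hA : ENNReal.ofReal (∫ x in (0:ℝ)..X, Hd h (F x)) =
      ∫⁻ x in Ioc (0:ℝ) X, ENNReal.ofReal (Hd h (F x)) := by
    rw [intervalIntegral.integral_of_le hX0.le,
      ofReal_integral_eq_lintegral_ofReal hIoc
        (ae_of_all _ (fun x => (Hd_mem hdist (FIcc x)).1))]
  set K : ℝ → ℝ → ENNReal := fun x s =>
    ENNReal.ofReal (F x) * Set.indicator {s' | s' < W x} (fun _ => 1) s with hKdef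
  have claim1 : ∀ x ∈ Ioc (0:ℝ) X, ENNReal.ofReal (Hd h (F x)) =
      ∫⁻ s in Ioi (0:ℝ), K x s := by
    intro x hx
    have hFx0 : 0 < F x := hFxpos x hx.1
    have h1 : ∫⁻ s in Ioi (0:ℝ), K x s =
        ENNReal.ofReal (F x) * ∫⁻ s in Ioi (0:ℝ),
          Set.indicator {s' | s' < W x} (fun _ => (1:ENNReal)) s :=
      lintegral_const_mul' _ _ ENNReal.ofReal_ne_top
    have h2 : {s' : ℝ | s' < W x} = Iio (W x) := rfl
    have h3 : ∫⁻ s in Ioi (0:ℝ),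
        Set.indicator {s' | s' < W x} (fun _ => (1:ENNReal)) s = ENNReal.ofReal (W x) := by
      rw [h2, lintegral_indicator measurableSet_Iio, setLIntegral_const,
        Measure.restrict_apply measurableSet_Iio, Iio_inter_Ioi, Real.volume_Ioo, sub_zero,
        one_mul]
    have h4 : F x * W x = Hd h (F x) := by
      simp only [hWdef]
      field_simp
    rw [h1, h3, ← ENNReal.ofReal_mul hFx0.le, h4]
  have hmeasK : Measurable (Function.uncurry K) := by
    apply Measurable.mul
    · exact ENNReal.measurable_ofReal.comp (hc.measurable.comp measurable_fst)
    · have hset : MeasurableSet {p : ℝ × ℝ | p.2 < W p.1} :=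
        measurableSet_lt measurable_snd (hWmeas.comp measurable_fst)
      have heq : (fun p : ℝ × ℝ => Set.indicator {s' | s' < W p.1} (fun _ => (1:ENNReal)) p.2) =
          Set.indicator {p : ℝ × ℝ | p.2 < W p.1} (fun _ => (1:ENNReal)) := by
        ext p
        by_cases hp : p.2 < W p.1
        · simp [Set.indicator, hp]
        · simp [Set.indicator, hp]
      show Measurable fun p : ℝ × ℝ => Set.indicator {s' | s' < W p.1} (fun _ => (1:ENNReal)) p.2
      rw [heq]
      exact measurable_const.indicator hset
  have hswap : ∫⁻ x in Ioc (0:ℝ) X, ∫⁻ s in Ioi (0:ℝ), K x s =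
      ∫⁻ s in Ioi (0:ℝ), ∫⁻ x in Ioc (0:ℝ) X, K x s :=
    lintegral_lintegral_swap hmeasK.aemeasurable
  have hinner : ∀ s : ℝ, ∫⁻ x in Ioc (0:ℝ) X, K x s =
      ENNReal.ofReal (mitIntegral F (min t (lvl h s))) := by
    intro s
    set c := lvl h s with hcdef
    have hc0 : 0 ≤ c := lvl_nonneg s
    have hKind : ∀ x : ℝ, K x s =
        Set.indicator {x' | s < W x'} (fun x' => ENNReal.ofReal (F x')) x := by
      intro x
      by_cases hx : s < W x
      · simp [hKdef, Set.indicator, hx]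
      · simp [hKdef, Set.indicator, hx]
    have hSmeas : MeasurableSet {x' : ℝ | s < W x'} :=
      measurableSet_lt measurable_const hWmeas
    have hKint : ∫⁻ x in Ioc (0:ℝ) X, K x s =
        ∫⁻ x in {x' | s < W x'} ∩ Ioc (0:ℝ) X, ENNReal.ofReal (F x) := by
      simp_rw [hKind]
      rw [lintegral_indicator hSmeas, Measure.restrict_restrict hSmeas]
    rcases le_or_gt t c with hct | hct
    · -- min t c = t, set is a.e. `Ioo 0 X`
      have hmin : min t c = t := min_eq_left hct
      have hsub1 : ({x' | s < W x'} ∩ Ioc (0:ℝ) X) \ Ioo 0 X ⊆ {X} := by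
        rintro x ⟨⟨_, hx2⟩, hx3⟩
        simp only [mem_Ioo, not_and, not_lt] at hx3
        exact mem_singleton_iff.2 (le_antisymm hx2.2 (hx3 hx2.1))
      have hsub2 : Ioo (0:ℝ) X \ ({x' | s < W x'} ∩ Ioc 0 X) = ∅ := by
        rw [diff_eq_empty]
        intro x hx
        have hFx0 := hFxpos x hx.1
        have hFxlt : F x < t := by
          rw [← hFX]; exact hFs hx.1.le hX0.le hx.2
        exact ⟨lt_of_lt_lvl hanti ⟨hFx0, cdf_le_one hF x⟩ (lt_of_lt_of_le hFxlt hct),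
          hx.1, hx.2.le⟩
      have hae : ({x' | s < W x'} ∩ Ioc (0:ℝ) X : Set ℝ) =ᵐ[volume] Ioo (0:ℝ) X := by
        rw [ae_eq_set]
        exact ⟨measure_mono_null hsub1 (measure_singleton X), by rw [hsub2]; exact measure_empty⟩
      rw [hKint, Measure.restrict_congr_set hae, lint_ofReal_Ioo hF hc hX0.le, hmin,
        mitIntegral, ← hXdef]
    · rcases eq_or_lt_of_le hc0 with hc0' | hc0'
      · -- c = 0, set is empty
        have hmin : min t c = c := min_eq_right hct.le
        have hempty : {x' | s < W x'} ∩ Ioc (0:ℝ) X = ∅ := by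
          rw [eq_empty_iff_forall_notMem]
          rintro x ⟨hx1, hx2⟩
          have hFx0 := hFxpos x hx2.1
          have hle : F x ≤ c := le_lvl_of_lt ⟨hFx0, cdf_le_one hF x⟩ hx1
          rw [← hc0'] at hle
          linarith
        rw [hKint, hempty, Measure.restrict_empty, lintegral_zero_measure, hmin, ← hc0',
          mit_zero hF, ENNReal.ofReal_zero]
      · -- 0 < c < t
        have hcIoo : c ∈ Ioo (0:ℝ) 1 := ⟨hc0', lt_trans hct ht.2⟩
        have hmin : min t c = c := min_eq_right hct.le
        set m := quantile F c with hmdef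
        have hm0 : 0 < m := quantile_pos hF hc hcIoo
        have hmX : m ≤ X := quantile_mono hF hcIoo ht hct.le
        have hFm : F m = c := cdf_quantile hF hc hcIoo
        have hsub1 : ({x' | s < W x'} ∩ Ioc (0:ℝ) X) \ Ioo 0 m ⊆
            {x | x ∈ Ici (0:ℝ) ∧ F x = c} := by
          rintro x ⟨⟨hx1, hx2⟩, hx3⟩
          simp only [mem_Ioo, not_and, not_lt] at hx3
          have hmx : m ≤ x := hx3 hx2.1
          have hle : F x ≤ c := le_lvl_of_lt ⟨hFxpos x hx2.1, cdf_le_one hF x⟩ hx1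
          have hge : c ≤ F x := by rw [← hFm]; exact hF.1 hmx
          exact ⟨hx2.1.le, le_antisymm hle hge⟩
        have hss : {x | x ∈ Ici (0:ℝ) ∧ F x = c}.Subsingleton := by
          rintro x ⟨hx1, hx2⟩ y ⟨hy1, hy2⟩
          exact hFs.injOn hx1 hy1 (hx2.trans hy2.symm)
        have hsub2 : Ioo (0:ℝ) m \ ({x' | s < W x'} ∩ Ioc 0 X) = ∅ := by
          rw [diff_eq_empty]
          intro x hx
          have hFx0 := hFxpos x hx.1
          have hFxlt : F x < c := (lt_quantile_iff hF hcIoo hc).1 hx.2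
          exact ⟨lt_of_lt_lvl hanti ⟨hFx0, cdf_le_one hF x⟩ hFxlt, hx.1,
            le_trans hx.2.le hmX⟩
        have hae : ({x' | s < W x'} ∩ Ioc (0:ℝ) X : Set ℝ) =ᵐ[volume] Ioo (0:ℝ) m := by
          rw [ae_eq_set]
          exact ⟨measure_mono_null hsub1 (hss.measure_zero _),
            by rw [hsub2]; exact measure_empty⟩
        rw [hKint, Measure.restrict_congr_set hae, lint_ofReal_Ioo hF hc hm0.le, hmin,
          mitIntegral, ← hmdef]
  rw [hA, setLIntegral_congr_fun measurableSet_Ioc claim1, hswap]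
  exact setLIntegral_congr_fun measurableSet_Ioi (fun s _ => hinner s)

end QmitAux

namespace QmitAux

lemma pointwiseAux (a b : ℝ → ℝ)
    (a0 : a 0 = 0) (b0 : b 0 = 0)
    (bpos : ∀ u, u ∈ Ioo (0:ℝ) 1 → 0 < b u)
    (bnonneg : ∀ u, u ∈ Ico (0:ℝ) 1 → 0 ≤ b u)
    (bmono : ∀ u v, u ∈ Ioo (0:ℝ) 1 → v ∈ Ioo (0:ℝ) 1 → u ≤ v → b u ≤ b v)
    (cross : ∀ u v, u ∈ Ioo (0:ℝ) 1 → v ∈ Ioo (0:ℝ) 1 → u ≤ v → a v * b u ≤ a u * b v)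
    {t1 t2 c d : ℝ} (ht1 : t1 ∈ Ioo (0:ℝ) 1) (ht2 : t2 ∈ Ioo (0:ℝ) 1) (h12 : t1 ≤ t2)
    (hc : c ∈ Icc (0:ℝ) 1) (hd : d ∈ Icc (0:ℝ) 1) (hcd : c ≤ d) :
    a (min t2 c) * b (min t1 d) + a (min t2 d) * b (min t1 c) ≤
      a (min t1 c) * b (min t2 d) + a (min t1 d) * b (min t2 c) := by
  rcases le_or_gt t1 c with ht1c | ht1c
  · have hm1 : min t1 c = t1 := min_eq_left ht1c
    have hm2 : min t1 d = t1 := min_eq_left (le_trans ht1c hcd)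
    have he1 : min t2 c ∈ Ioo (0:ℝ) 1 :=
      ⟨lt_min ht2.1 (lt_of_lt_of_le ht1.1 ht1c), lt_of_le_of_lt (min_le_left _ _) ht2.2⟩
    have he2 : min t2 d ∈ Ioo (0:ℝ) 1 :=
      ⟨lt_min ht2.1 (lt_of_lt_of_le ht1.1 (le_trans ht1c hcd)),
        lt_of_le_of_lt (min_le_left _ _) ht2.2⟩
    have hk1 := cross t1 (min t2 c) ht1 he1 (le_min h12 ht1c)
    have hk2 := cross t1 (min t2 d) ht1 he2 (le_min h12 (le_trans ht1c hcd))
    rw [hm1, hm2]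
    linarith
  · rcases le_or_gt d t1 with hdt1 | hdt1
    · have hm1 : min t1 c = c := min_eq_right ht1c.le
      have hm2 : min t2 c = c := min_eq_right (le_trans ht1c.le h12)
      have hm3 : min t1 d = d := min_eq_right hdt1
      have hm4 : min t2 d = d := min_eq_right (le_trans hdt1 h12)
      rw [hm1, hm2, hm3, hm4]
    · -- c < t1 < d
      have hm1 : min t1 c = c := min_eq_right ht1c.le
      have hm2 : min t2 c = c := min_eq_right (le_trans ht1c.le h12)
      have hm3 : min t1 d = t1 := min_eq_left hdt1.le
      set e := min t2 d with hedef
      have heIoo : e ∈ Ioo (0:ℝ) 1 :=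
        ⟨lt_min ht2.1 (lt_trans ht1.1 hdt1), lt_of_le_of_lt (min_le_left _ _) ht2.2⟩
      have ht1e : t1 ≤ e := le_min h12 hdt1.le
      rw [hm1, hm2, hm3]
      rcases eq_or_lt_of_le hc.1 with hc0 | hc0
      · rw [← hc0, a0, b0]
        simp
      · have hcIoo : c ∈ Ioo (0:ℝ) 1 := ⟨hc0, lt_trans ht1c ht1.2⟩
        have hk1 := cross c t1 hcIoo ht1 ht1c.le
        have hk2 := cross t1 e ht1 heIoo ht1e
        have hk3 := bmono t1 e ht1 heIoo ht1e
        have hb1 : 0 < b t1 := bpos t1 ht1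
        have hbc : 0 ≤ b c := bnonneg c ⟨hcIoo.1.le, hcIoo.2⟩
        have key : b t1 * (a e * b c + a c * b t1) ≤ b t1 * (a c * b e + a t1 * b c) := by
          nlinarith [mul_le_mul_of_nonneg_right hk2 hbc,
            mul_nonneg (sub_nonneg.2 hk3) (sub_nonneg.2 hk1)]
        have := le_of_mul_le_mul_left key hb1
        linarith

lemma pointwiseIneq (a b : ℝ → ℝ)
    (a0 : a 0 = 0) (b0 : b 0 = 0)
    (bpos : ∀ u, u ∈ Ioo (0:ℝ) 1 → 0 < b u)
    (bnonneg : ∀ u, u ∈ Ico (0:ℝ) 1 → 0 ≤ b u)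
    (bmono : ∀ u v, u ∈ Ioo (0:ℝ) 1 → v ∈ Ioo (0:ℝ) 1 → u ≤ v → b u ≤ b v)
    (cross : ∀ u v, u ∈ Ioo (0:ℝ) 1 → v ∈ Ioo (0:ℝ) 1 → u ≤ v → a v * b u ≤ a u * b v)
    {t1 t2 c d : ℝ} (ht1 : t1 ∈ Ioo (0:ℝ) 1) (ht2 : t2 ∈ Ioo (0:ℝ) 1) (h12 : t1 ≤ t2)
    (hc : c ∈ Icc (0:ℝ) 1) (hd : d ∈ Icc (0:ℝ) 1) :
    a (min t2 c) * b (min t1 d) + a (min t2 d) * b (min t1 c) ≤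
      a (min t1 c) * b (min t2 d) + a (min t1 d) * b (min t2 c) := by
  rcases le_total c d with hcd | hdc
  · exact pointwiseAux a b a0 b0 bpos bnonneg bmono cross ht1 ht2 h12 hc hd hcd
  · have := pointwiseAux a b a0 b0 bpos bnonneg bmono cross ht1 ht2 h12 hd hc hdc
    linarith

variable {F G h : ℝ → ℝ}

lemma mit_min_antitone (hF : IsNonnegCDF F) (hc : Continuous F)
    {t : ℝ} (ht : t ∈ Ioo (0:ℝ) 1) :
    Antitone (fun s => mitIntegral F (min t (lvl h s))) := by
  intro s s' hss
  simp only
  have hl : lvl h s' ≤ lvl h s := lvl_antitone hss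
  have hle : min t (lvl h s') ≤ min t (lvl h s) := min_le_min le_rfl hl
  have h0' : 0 ≤ min t (lvl h s') := le_min ht.1.le (lvl_nonneg s')
  have hlt : min t (lvl h s) < 1 := lt_of_le_of_lt (min_le_left _ _) ht.2
  rcases eq_or_lt_of_le h0' with he | he
  · rw [← he, mit_zero hF]
    exact mit_nonneg hF hc (le_min ht.1.le (lvl_nonneg s)) hlt
  · exact mit_mono hF hc ⟨he, lt_of_le_of_lt hle hlt⟩
      ⟨lt_of_lt_of_le he hle, hlt⟩ hle

lemma mit_min_nonneg (hF : IsNonnegCDF F) (hc : Continuous F)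
    {t : ℝ} (ht : t ∈ Ioo (0:ℝ) 1) (s : ℝ) :
    0 ≤ mitIntegral F (min t (lvl h s)) :=
  mit_nonneg hF hc (le_min ht.1.le (lvl_nonneg s))
    (lt_of_le_of_lt (min_le_left _ _) ht.2)

lemma tildeA_nonneg (hF : IsNonnegCDF F) (hFs : StrictMonoOn F (Ici 0))
    (hc : Continuous F) (hdist : IsDistortionFn h) {t : ℝ} (ht0 : 0 < t) (ht1 : t ≤ 1) :
    0 ≤ ∫ x in (0:ℝ)..(quantile F t), Hd h (F x) := by
  rcases eq_or_lt_of_le ht1 with he | hlt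
  · rw [he, quantile_one hF hFs]
    simp
  · exact intervalIntegral.integral_nonneg (quantile_nonneg hF ht0 hlt)
      (fun x _ => (Hd_mem hdist ⟨cdf_nonneg hF x, cdf_le_one hF x⟩).1)

lemma tildeB_pos (hG : IsNonnegCDF G) (hGs : StrictMonoOn G (Ici 0)) (hc : Continuous G)
    (hdist : IsDistortionFn h) (hstrict : StrictMonoOn h (Icc 0 1))
    {t : ℝ} (ht : t ∈ Ioo (0:ℝ) 1) :
    0 < ∫ x in (0:ℝ)..(quantile G t), Hd h (G x) := by
  set Y := quantile G t with hY
  have hY0 : 0 < Y := quantile_pos hG hc ht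
  have hGY2 : 0 < G (Y / 2) := by
    rw [← hG.2.1 0 le_rfl]
    exact hGs (mem_Ici.2 le_rfl) (by linarith : (0:ℝ) ≤ Y / 2) (by linarith)
  have hHpos : 0 < Hd h (G (Y/2)) := by
    have := Hd_strict hstrict (left_mem_Icc.2 zero_le_one)
      ⟨(cdf_nonneg hG _), (cdf_le_one hG _)⟩ hGY2
    rwa [Hd_zero hdist] at this
  have hmono : Monotone (fun x => Hd h (G x)) :=
    fun x y hxy => Hd_mono hdist ⟨cdf_nonneg hG x, cdf_le_one hG x⟩
      ⟨cdf_nonneg hG y, cdf_le_one hG y⟩ (hG.1 hxy)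
  have hint1 : IntervalIntegrable (fun x => Hd h (G x)) volume 0 (Y/2) :=
    (hmono.monotoneOn _).intervalIntegrable
  have hint2 : IntervalIntegrable (fun x => Hd h (G x)) volume (Y/2) Y :=
    (hmono.monotoneOn _).intervalIntegrable
  have hsplit : ∫ x in (0:ℝ)..Y, Hd h (G x) =
      (∫ x in (0:ℝ)..(Y/2), Hd h (G x)) + ∫ x in (Y/2)..Y, Hd h (G x) :=
    (intervalIntegral.integral_add_adjacent_intervals hint1 hint2).symm
  have h1 : 0 ≤ ∫ x in (0:ℝ)..(Y/2), Hd h (G x) :=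
    intervalIntegral.integral_nonneg (by linarith)
      (fun x _ => (Hd_mem hdist ⟨cdf_nonneg hG x, cdf_le_one hG x⟩).1)
  have h2 : (Y/2) * Hd h (G (Y/2)) ≤ ∫ x in (Y/2)..Y, Hd h (G x) := by
    have := intervalIntegral.integral_mono_on (by linarith : Y/2 ≤ Y)
      (intervalIntegrable_const (μ := volume) (c := Hd h (G (Y/2)))) hint2
      (fun x hx => hmono hx.1)
    rw [intervalIntegral.integral_const, smul_eq_mul] at this
    calc (Y/2) * Hd h (G (Y/2)) = (Y - Y/2) * Hd h (G (Y/2)) := by ring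
    _ ≤ _ := this
  nlinarith

lemma core (hF : IsNonnegCDF F) (hFs : StrictMonoOn F (Ici 0)) (hcF : Continuous F)
    (hG : IsNonnegCDF G) (hGs : StrictMonoOn G (Ici 0)) (hcG : Continuous G)
    (hdist : IsDistortionFn h) (hanti : Antistarshaped (fun p => 1 - h (1 - p)))
    (hcross : ∀ u v, u ∈ Ioo (0:ℝ) 1 → v ∈ Ioo (0:ℝ) 1 → u ≤ v →
      mitIntegral F v * mitIntegral G u ≤ mitIntegral F u * mitIntegral G v)
    {t1 t2 : ℝ} (ht1 : t1 ∈ Ioo (0:ℝ) 1) (ht2 : t2 ∈ Ioo (0:ℝ) 1) (h12 : t1 ≤ t2) :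
    (∫ x in (0:ℝ)..(quantile F t2), Hd h (F x)) * (∫ x in (0:ℝ)..(quantile G t1), Hd h (G x)) ≤
      (∫ x in (0:ℝ)..(quantile F t1), Hd h (F x)) * (∫ x in (0:ℝ)..(quantile G t2), Hd h (G x)) := by
  set A1 := ∫ x in (0:ℝ)..(quantile F t1), Hd h (F x) with hA1
  set A2 := ∫ x in (0:ℝ)..(quantile F t2), Hd h (F x) with hA2
  set B1 := ∫ x in (0:ℝ)..(quantile G t1), Hd h (G x) with hB1
  set B2 := ∫ x in (0:ℝ)..(quantile G t2), Hd h (G x) with hB2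
  set fa1 : ℝ → ENNReal := fun s => ENNReal.ofReal (mitIntegral F (min t1 (lvl h s))) with hfa1
  set fa2 : ℝ → ENNReal := fun s => ENNReal.ofReal (mitIntegral F (min t2 (lvl h s))) with hfa2
  set fb1 : ℝ → ENNReal := fun s => ENNReal.ofReal (mitIntegral G (min t1 (lvl h s))) with hfb1
  set fb2 : ℝ → ENNReal := fun s => ENNReal.ofReal (mitIntegral G (min t2 (lvl h s))) with hfb2
  have hmfa1 : Measurable fa1 :=
    ENNReal.measurable_ofReal.comp (mit_min_antitone hF hcF ht1).measurable
  have hmfa2 : Measurable fa2 :=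
    ENNReal.measurable_ofReal.comp (mit_min_antitone hF hcF ht2).measurable
  have hmfb1 : Measurable fb1 :=
    ENNReal.measurable_ofReal.comp (mit_min_antitone hG hcG ht1).measurable
  have hmfb2 : Measurable fb2 :=
    ENNReal.measurable_ofReal.comp (mit_min_antitone hG hcG ht2).measurable
  have r1 : ENNReal.ofReal A1 = ∫⁻ s in Ioi (0:ℝ), fa1 s := rep hF hFs hcF hdist hanti ht1
  have r2 : ENNReal.ofReal A2 = ∫⁻ s in Ioi (0:ℝ), fa2 s := rep hF hFs hcF hdist hanti ht2
  have r3 : ENNReal.ofReal B1 = ∫⁻ s in Ioi (0:ℝ), fb1 s := rep hG hGs hcG hdist hanti ht1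
  have r4 : ENNReal.ofReal B2 = ∫⁻ s in Ioi (0:ℝ), fb2 s := rep hG hGs hcG hdist hanti ht2
  -- pointwise bound
  have hpt : ∀ s r : ℝ, fa2 s * fb1 r + fb1 s * fa2 r ≤ fa1 s * fb2 r + fb2 s * fa1 r := by
    intro s r
    have hcs : lvl h s ∈ Icc (0:ℝ) 1 := ⟨lvl_nonneg s, lvl_le_one s⟩
    have hcr : lvl h r ∈ Icc (0:ℝ) 1 := ⟨lvl_nonneg r, lvl_le_one r⟩
    have hreal := pointwiseIneq (mitIntegral F) (mitIntegral G) (mit_zero hF) (mit_zero hG)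
      (fun u hu => mit_pos hG hGs hcG hu)
      (fun u hu => mit_nonneg hG hcG hu.1 hu.2)
      (fun u v hu hv huv => mit_mono hG hcG hu hv huv)
      (fun u v hu hv huv => hcross u v hu hv huv)
      ht1 ht2 h12 hcs hcr
    have n1 := mit_min_nonneg (h := h) hF hcF ht2 s
    have n2 := mit_min_nonneg (h := h) hG hcG ht1 r
    have n3 := mit_min_nonneg (h := h) hG hcG ht1 s
    have n4 := mit_min_nonneg (h := h) hF hcF ht2 r
    have n5 := mit_min_nonneg (h := h) hF hcF ht1 s
    have n6 := mit_min_nonneg (h := h) hG hcG ht2 r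
    have n7 := mit_min_nonneg (h := h) hG hcG ht2 s
    have n8 := mit_min_nonneg (h := h) hF hcF ht1 r
    simp only [hfa1, hfa2, hfb1, hfb2]
    rw [← ENNReal.ofReal_mul n1, ← ENNReal.ofReal_mul n3,
      ← ENNReal.ofReal_add (mul_nonneg n1 n2) (mul_nonneg n3 n4),
      ← ENNReal.ofReal_mul n5, ← ENNReal.ofReal_mul n7,
      ← ENNReal.ofReal_add (mul_nonneg n5 n6) (mul_nonneg n7 n8)]
    apply ENNReal.ofReal_le_ofReal
    nlinarith [hreal]
  -- double integral comparison
  have hdouble : ENNReal.ofReal A2 * ENNReal.ofReal B1 + ENNReal.ofReal A2 * ENNReal.ofReal B1 ≤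
      ENNReal.ofReal A1 * ENNReal.ofReal B2 + ENNReal.ofReal A1 * ENNReal.ofReal B2 := by
    have step1 : ENNReal.ofReal A2 * ENNReal.ofReal B1 + ENNReal.ofReal A2 * ENNReal.ofReal B1 =
        ∫⁻ s in Ioi (0:ℝ), (fa2 s * ENNReal.ofReal B1 + fb1 s * ENNReal.ofReal A2) := by
      rw [lintegral_add_left (hmfa2.mul_const _)]
      congr 1
      · rw [r2, lintegral_mul_const' _ _ ENNReal.ofReal_ne_top]
      · rw [mul_comm, r3, lintegral_mul_const' _ _ ENNReal.ofReal_ne_top]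
    have step2 : ENNReal.ofReal A1 * ENNReal.ofReal B2 + ENNReal.ofReal A1 * ENNReal.ofReal B2 =
        ∫⁻ s in Ioi (0:ℝ), (fa1 s * ENNReal.ofReal B2 + fb2 s * ENNReal.ofReal A1) := by
      rw [lintegral_add_left (hmfa1.mul_const _)]
      congr 1
      · rw [r1, lintegral_mul_const' _ _ ENNReal.ofReal_ne_top]
      · rw [mul_comm, r4, lintegral_mul_const' _ _ ENNReal.ofReal_ne_top]
    rw [step1, step2]
    refine lintegral_mono (fun s => ?_)
    have i1 : fa2 s * ENNReal.ofReal B1 = ∫⁻ r in Ioi (0:ℝ), fa2 s * fb1 r := by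
      rw [r3]
      exact (lintegral_const_mul' _ _ ENNReal.ofReal_ne_top).symm
    have i2 : fb1 s * ENNReal.ofReal A2 = ∫⁻ r in Ioi (0:ℝ), fb1 s * fa2 r := by
      rw [r2]
      exact (lintegral_const_mul' _ _ ENNReal.ofReal_ne_top).symm
    have i3 : fa1 s * ENNReal.ofReal B2 = ∫⁻ r in Ioi (0:ℝ), fa1 s * fb2 r := by
      rw [r4]
      exact (lintegral_const_mul' _ _ ENNReal.ofReal_ne_top).symm
    have i4 : fb2 s * ENNReal.ofReal A1 = ∫⁻ r in Ioi (0:ℝ), fb2 s * fa1 r := by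
      rw [r1]
      exact (lintegral_const_mul' _ _ ENNReal.ofReal_ne_top).symm
    rw [i1, i2, i3, i4, ← lintegral_add_left (hmfb1.const_mul _),
      ← lintegral_add_left (hmfb2.const_mul _)]
    exact lintegral_mono (fun r => hpt s r)
  have key : ENNReal.ofReal A2 * ENNReal.ofReal B1 ≤ ENNReal.ofReal A1 * ENNReal.ofReal B2 := by
    rw [← two_mul, ← two_mul] at hdouble
    exact (ENNReal.mul_le_mul_iff_right (by norm_num) (by norm_num)).1 hdouble
  have hA1n : 0 ≤ A1 := tildeA_nonneg hF hFs hcF hdist ht1.1 ht1.2.le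
  have hA2n : 0 ≤ A2 := tildeA_nonneg hF hFs hcF hdist ht2.1 ht2.2.le
  have hB2n : 0 ≤ B2 := tildeA_nonneg hG hGs hcG hdist ht2.1 ht2.2.le
  rw [← ENNReal.ofReal_mul hA2n, ← ENNReal.ofReal_mul hA1n] at key
  exact (ENNReal.ofReal_le_ofReal_iff (mul_nonneg hA1n hB2n)).1 key

end QmitAux

/-- **Theorem 5 (preservation of the qmit order).**
Let `X`, `Y` be nonnegative absolutely continuous random variables with finite means and
strictly increasing distribution functions `F`, `G`, and let `h` be a strictly increasing
distortion function whose dual distortion `h*(p) = 1 - h(1-p)` is antistarshaped.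
If `X ≤_qmit Y`, then `X_h ≤_qmit Y_h`. -/
theorem qmit_preserved_by_antistarshaped_dual_distortion
    (F G f g h : ℝ → ℝ)
    (hF : IsNonnegCDF F) (hG : IsNonnegCDF G)
    (hFstrict : StrictMonoOn F (Ici 0)) (hGstrict : StrictMonoOn G (Ici 0))
    (hfd : ∀ x : ℝ, HasDerivAt F (f x) x) (hgd : ∀ x : ℝ, HasDerivAt G (g x) x)
    (hFmean : IntegrableOn (fun x => 1 - F x) (Ioi 0) volume)
    (hGmean : IntegrableOn (fun x => 1 - G x) (Ioi 0) volume)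
    (hdist : IsDistortionFn h) (hstrict : StrictMonoOn h (Icc 0 1))
    (hdualanti : Antistarshaped (fun p => 1 - h (1 - p)))
    (hle : QMIT_le F G) :
    QMIT_le (distortedCDF h F) (distortedCDF h G) := by
  classical
  have hcF : Continuous F := continuous_iff_continuousAt.2 fun x => (hfd x).continuousAt
  have hcG : Continuous G := continuous_iff_continuousAt.2 fun x => (hgd x).continuousAt
  intro p1 hp1 p2 hp2 hp12
  show mitIntegral (distortedCDF h F) p2 / mitIntegral (distortedCDF h G) p2 ≤
    mitIntegral (distortedCDF h F) p1 / mitIntegral (distortedCDF h G) p1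
  have hθmem1 := QmitAux.theta_mem_Icc (h := h) hdist hp1.2.le
  have hθmem2 := QmitAux.theta_mem_Icc (h := h) hdist hp2.2.le
  have hθpos1 := QmitAux.theta_pos hdist hp1
  have hθpos2 := QmitAux.theta_pos hdist hp2
  have hθ12 : QmitAux.theta h p1 ≤ QmitAux.theta h p2 :=
    QmitAux.theta_mono hdist hp2.2.le hp12
  have hdFq : ∀ p ∈ Ioo (0:ℝ) 1, mitIntegral (distortedCDF h F) p =
      ∫ x in (0:ℝ)..(quantile F (QmitAux.theta h p)), QmitAux.Hd h (F x) := by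
    intro p hp
    rw [mitIntegral, QmitAux.quantile_distorted hF hdist hp]
    rfl
  have hdGq : ∀ p ∈ Ioo (0:ℝ) 1, mitIntegral (distortedCDF h G) p =
      ∫ x in (0:ℝ)..(quantile G (QmitAux.theta h p)), QmitAux.Hd h (G x) := by
    intro p hp
    rw [mitIntegral, QmitAux.quantile_distorted hG hdist hp]
    rfl
  rcases eq_or_lt_of_le hθmem2.2 with hθ2e | hθ2lt
  · have hF0 : mitIntegral (distortedCDF h F) p2 = 0 := by
      rw [hdFq p2 hp2, hθ2e, QmitAux.quantile_one hF hFstrict,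
        intervalIntegral.integral_same]
    rw [hF0, zero_div]
    apply div_nonneg
    · rw [hdFq p1 hp1]
      exact QmitAux.tildeA_nonneg hF hFstrict hcF hdist hθpos1 hθmem1.2
    · rw [hdGq p1 hp1]
      exact QmitAux.tildeA_nonneg hG hGstrict hcG hdist hθpos1 hθmem1.2
  · have hθ1Ioo : QmitAux.theta h p1 ∈ Ioo (0:ℝ) 1 := ⟨hθpos1, lt_of_le_of_lt hθ12 hθ2lt⟩
    have hθ2Ioo : QmitAux.theta h p2 ∈ Ioo (0:ℝ) 1 := ⟨hθpos2, hθ2lt⟩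
    rw [hdFq p1 hp1, hdFq p2 hp2, hdGq p1 hp1, hdGq p2 hp2,
      div_le_div_iff₀ (QmitAux.tildeB_pos hG hGstrict hcG hdist hstrict hθ2Ioo)
        (QmitAux.tildeB_pos hG hGstrict hcG hdist hstrict hθ1Ioo)]
    refine QmitAux.core hF hFstrict hcF hG hGstrict hcG hdist hdualanti ?_ hθ1Ioo hθ2Ioo hθ12
    intro u v hu hv huv
    exact (div_le_div_iff₀ (QmitAux.mit_pos hG hGstrict hcG hv)
      (QmitAux.mit_pos hG hGstrict hcG hu)).1 (hle hu hv huv)
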